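/- The function u(x,t) = max(0, -t) satisfies u_xx - u_t = 1_{u>0} almost everywhere in R^2 (indeed for all t ≠ 0), u ≥ 0 everywhere, but its time derivative u_t is discontinuous at every point (x,0). -/

import Mathlib

open Filter Topology

lemma dneg (t : ℝ) (ht : t < 0) : deriv (fun s : ℝ => max 0 (-s)) t = -1 := by
  have h : (fun s : ℝ => max 0 (-s)) =ᶠ[𝓝 t] fun s => -s := by
    filter_upwards [Iio_mem_nhds ht] with s hs
    exact max_eq_right (by have := Set.mem_Iio.mp hs; linarith)
  rw [h.deriv_eq]
  simp [((hasDerivAt_id t).neg).deriv]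

lemma dpos (t : ℝ) (ht : 0 < t) : deriv (fun s : ℝ => max 0 (-s)) t = 0 := by
  have h : (fun s : ℝ => max 0 (-s)) =ᶠ[𝓝 t] fun _ => (0:ℝ) := by
    filter_upwards [Ioi_mem_nhds ht] with s hs
    exact max_eq_left (by have := Set.mem_Ioi.mp hs; linarith)
  rw [h.deriv_eq, deriv_const]

theorem stmt0 :
    (∀ t : ℝ, (0:ℝ) ≤ max 0 (-t)) ∧
    (∀ x t : ℝ, t ≠ 0 →
      deriv (deriv (fun _ : ℝ => max 0 (-t))) x - deriv (fun s : ℝ => max 0 (-s)) t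
        = Set.indicator {p : ℝ × ℝ | 0 < max 0 (-p.2)} (fun _ => (1:ℝ)) (x, t)) ∧
    (∀ x : ℝ, ¬ ContinuousAt (fun p : ℝ × ℝ => deriv (fun s : ℝ => max 0 (-s)) p.2) (x, 0)) := by
  refine ⟨fun t => le_max_left _ _, fun x t ht => ?_, fun x hcont => ?_⟩
  · have h1 : deriv (deriv (fun _ : ℝ => max 0 (-t))) x = 0 := by
      simp [deriv_const]
    rw [h1, zero_sub]
    rcases lt_or_gt_of_ne ht with h | h
    · rw [dneg t h, Set.indicator_of_mem]
      · ring
      · simp only [Set.mem_setOf_eq]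
        exact lt_max_of_lt_right (by linarith)
    · rw [dpos t h, Set.indicator_of_notMem]
      · ring
      · simp only [Set.mem_setOf_eq, max_eq_left (by linarith : -t ≤ 0)]
        exact lt_irrefl 0
  · set f := fun p : ℝ × ℝ => deriv (fun s : ℝ => max 0 (-s)) p.2 with hf
    have hneg : Tendsto (fun n : ℕ => ((x, -(1 / (n + 1))) : ℝ × ℝ)) atTop (𝓝 (x, 0)) := by
      refine Tendsto.prodMk_nhds tendsto_const_nhds ?_
      simpa using (tendsto_one_div_add_atTop_nhds_zero_nat (𝕜 := ℝ)).neg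
    have hpos : Tendsto (fun n : ℕ => ((x, (1 / (n + 1))) : ℝ × ℝ)) atTop (𝓝 (x, 0)) := by
      exact Tendsto.prodMk_nhds tendsto_const_nhds tendsto_one_div_add_atTop_nhds_zero_nat
    have h1 : Tendsto (fun n : ℕ => f (x, -(1 / (n + 1)))) atTop (𝓝 (f (x, 0))) :=
      (hcont.tendsto).comp hneg
    have h2 : Tendsto (fun n : ℕ => f (x, (1 / (n + 1)))) atTop (𝓝 (f (x, 0))) :=
      (hcont.tendsto).comp hpos
    have e1 : ∀ n : ℕ, f (x, -(1 / (n + 1))) = -1 := fun n => by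
      have : -(1 / ((n : ℝ) + 1)) < 0 := neg_lt_zero.mpr (by positivity)
      exact dneg _ this
    have e2 : ∀ n : ℕ, f (x, (1 / (n + 1))) = 0 := fun n => by
      have : (0:ℝ) < 1 / ((n : ℝ) + 1) := by positivity
      exact dpos _ this
    simp only [e1] at h1
    simp only [e2] at h2
    have l1 : f (x, 0) = -1 := tendsto_nhds_unique h1 tendsto_const_nhds
    have l2 : f (x, 0) = 0 := tendsto_nhds_unique h2 tendsto_const_nhds
    rw [l1] at l2
    norm_num at l2
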